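/- Let K be a field of characteristic zero, V a finite-dimensional K-vector space of dimension d, and n a natural number with n > d. Let ι : S_{d+1} → S_n be the embedding that lets a permutation act on the first d+1 letters and fixes the remaining letters. Then the kernel of the K-algebra homomorphism Φ_V : K[S_n] → End_K(V^{⊗n}), σ ↦ L_σ^{(n)}, is the two-sided ideal of K[S_n] generated by the element Σ_{σ ∈ S_{d+1}} sgn(σ)·ι(σ). -/

import Mathlib

open Equiv Finset

set_option linter.dupNamespace false

open scoped TensorProduct

/-- The endomorphism `L_σ^{(n)}` of the `n`-th tensor power of `V`, determined by
`v_1 ⊗ ⋯ ⊗ v_n ↦ v_{σ⁻¹(1)} ⊗ ⋯ ⊗ v_{σ⁻¹(n)}`. -/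
noncomputable def permMap (K : Type*) [Field K] (V : Type*) [AddCommGroup V] [Module K V]
    (n : ℕ) (σ : Equiv.Perm (Fin n)) :
    (⨂[K] _ : Fin n, V) →ₗ[K] ⨂[K] _ : Fin n, V :=
  (PiTensorProduct.reindex K (fun _ : Fin n => V) σ).toLinearMap

/-- The endomorphism `T^{⊗n}` of the `n`-th tensor power of `V` induced by `T : V →ₗ[K] V`. -/
noncomputable def tpowMap (K : Type*) [Field K] (V : Type*) [AddCommGroup V] [Module K V]
    (n : ℕ) (T : V →ₗ[K] V) :
    (⨂[K] _ : Fin n, V) →ₗ[K] ⨂[K] _ : Fin n, V :=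
  PiTensorProduct.map fun _ => T

/-- The `K`-linear map `Φ_V : K[S_n] → End_K(V^{⊗n})` determined by `σ ↦ L_σ^{(n)}`. -/
noncomputable def PhiMap (K : Type*) [Field K] (V : Type*) [AddCommGroup V] [Module K V]
    (n : ℕ) :
    MonoidAlgebra K (Equiv.Perm (Fin n)) →ₗ[K] Module.End K (⨂[K] _ : Fin n, V) :=
  Finsupp.linearCombination K (permMap K V n) ∘ₗ (MonoidAlgebra.coeffLinearEquiv K).toLinearMap


namespace SW

open Equiv Finset


variable {n d : ℕ}

lemma perm_inv_apply_self (σ : Equiv.Perm (Fin n)) (x : Fin n) : σ⁻¹ (σ x) = x :=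
  Equiv.symm_apply_apply σ x

lemma perm_apply_inv_self (σ : Equiv.Perm (Fin n)) (x : Fin n) : σ (σ⁻¹ x) = x :=
  Equiv.apply_symm_apply σ x

/-- `σ` has no decreasing subsequence of length `d+1`. -/
def Good (d : ℕ) {n : ℕ} (σ : Equiv.Perm (Fin n)) : Prop :=
  ∀ p : Fin (d + 1) → Fin n, StrictMono p → ¬ StrictAnti (⇑σ ∘ p)

/-- `s` is a decreasing chain (w.r.t. `σ`) of positions ending at `i`. -/
def IsChain (σ : Equiv.Perm (Fin n)) (i : Fin n) (s : Finset (Fin n)) : Prop :=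
  i ∈ s ∧ (∀ a ∈ s, a ≤ i) ∧ ∀ a ∈ s, ∀ b ∈ s, a < b → σ b < σ a

open scoped Classical in
/-- Length of the longest decreasing subsequence ending at position `i`. -/
noncomputable def lds (σ : Equiv.Perm (Fin n)) (i : Fin n) : ℕ :=
  (Finset.univ.powerset.filter (IsChain σ i)).sup Finset.card

lemma isChain_singleton (σ : Equiv.Perm (Fin n)) (i : Fin n) : IsChain σ i {i} := by
  refine ⟨by simp, by simp, ?_⟩
  intro a ha b hb hab
  simp only [Finset.mem_singleton] at ha hb
  subst ha; subst hb; exact absurd hab (lt_irrefl _)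

open scoped Classical in
lemma le_lds_of_isChain {σ : Equiv.Perm (Fin n)} {i : Fin n} {s : Finset (Fin n)}
    (h : IsChain σ i s) : s.card ≤ lds σ i := by
  refine Finset.le_sup ?_
  simp [Finset.mem_filter, h]

lemma one_le_lds (σ : Equiv.Perm (Fin n)) (i : Fin n) : 1 ≤ lds σ i := by
  simpa using le_lds_of_isChain (isChain_singleton σ i)

open scoped Classical in
lemma exists_chain_card_eq_lds (σ : Equiv.Perm (Fin n)) (i : Fin n) :
    ∃ s : Finset (Fin n), IsChain σ i s ∧ s.card = lds σ i := by
  have hne : (Finset.univ.powerset.filter (IsChain σ i)).Nonempty := by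
    refine ⟨{i}, ?_⟩
    simp [Finset.mem_filter, isChain_singleton σ i]
  obtain ⟨s, hs, hcard⟩ := Finset.exists_mem_eq_sup _ hne Finset.card
  simp only [Finset.mem_filter] at hs
  exact ⟨s, hs.2, hcard.symm⟩

lemma lds_lt_lds {σ : Equiv.Perm (Fin n)} {i j : Fin n} (hij : i < j) (hσ : σ j < σ i) :
    lds σ i < lds σ j := by
  obtain ⟨s, hs, hcard⟩ := exists_chain_card_eq_lds σ i
  have hj : j ∉ s := fun hj => absurd ((hs.2.1 j hj).trans_lt hij) (lt_irrefl _)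
  have hchain : IsChain σ j (insert j s) := by
    refine ⟨Finset.mem_insert_self _ _, ?_, ?_⟩
    · intro a ha
      rcases Finset.mem_insert.1 ha with rfl | ha
      · exact le_refl _
      · exact (hs.2.1 a ha).trans hij.le
    · intro a ha b hb hab
      rcases Finset.mem_insert.1 hb with hb' | hb'
      · subst hb'
        rcases Finset.mem_insert.1 ha with ha' | ha'
        · subst ha'; exact absurd hab (lt_irrefl _)
        · rcases eq_or_lt_of_le (hs.2.1 a ha') with h' | h'
          · rw [h']; exact hσ
          · exact hσ.trans (hs.2.2 a ha' i hs.1 h')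
      · rcases Finset.mem_insert.1 ha with ha' | ha'
        · subst ha'
          exact absurd (((hs.2.1 b hb').trans hij.le).trans_lt hab) (lt_irrefl _)
        · exact hs.2.2 a ha' b hb' hab
  have := le_lds_of_isChain hchain
  rw [Finset.card_insert_of_notMem hj] at this
  omega

lemma lds_le_of_good {σ : Equiv.Perm (Fin n)} (h : Good d σ) (i : Fin n) : lds σ i ≤ d := by
  by_contra hlt
  push_neg at hlt
  obtain ⟨s, hs, hcard⟩ := exists_chain_card_eq_lds σ i
  have hdles : d + 1 ≤ s.card := by omega
  obtain ⟨t, hts, htcard⟩ := Finset.exists_subset_card_eq hdles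
  set p : Fin (d+1) ↪o Fin n := t.orderEmbOfFin htcard with hp
  refine h p p.strictMono ?_
  intro a b hab
  have ha : (p a : Fin n) ∈ t := Finset.orderEmbOfFin_mem t htcard a
  have hb : (p b : Fin n) ∈ t := Finset.orderEmbOfFin_mem t htcard b
  exact hs.2.2 _ (hts ha) _ (hts hb) (p.strictMono hab)

/-- Strict lexicographic comparison of the "words" of two permutations. -/
def lexlt {n : ℕ} (σ τ : Equiv.Perm (Fin n)) : Prop :=
  ∃ i : Fin n, (∀ j, j < i → σ j = τ j) ∧ σ i < τ i

lemma lexlt_irrefl (σ : Equiv.Perm (Fin n)) : ¬ lexlt σ σ := by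
  rintro ⟨i, -, hi⟩; exact absurd hi (lt_irrefl _)

lemma lexlt_trans {σ τ ρ : Equiv.Perm (Fin n)} (h1 : lexlt σ τ) (h2 : lexlt τ ρ) : lexlt σ ρ := by
  obtain ⟨i, hi, hilt⟩ := h1
  obtain ⟨i', hi', hilt'⟩ := h2
  rcases lt_trichotomy i i' with h | rfl | h
  · exact ⟨i, fun j hj => (hi j hj).trans (hi' j (hj.trans h)), hilt.trans_le (hi' i h).le⟩
  · exact ⟨i, fun j hj => (hi j hj).trans (hi' j hj), hilt.trans hilt'⟩
  · exact ⟨i', fun j hj => (hi j (hj.trans h)).trans (hi' j hj), ((hi i' h).le.trans_lt hilt')⟩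

lemma lexlt_wf (n : ℕ) : WellFounded (@lexlt n) := by
  have h1 : IsTrans (Equiv.Perm (Fin n)) lexlt := ⟨fun _ _ _ => lexlt_trans⟩
  have h2 : IsIrrefl (Equiv.Perm (Fin n)) lexlt := ⟨lexlt_irrefl⟩
  exact Finite.wellFounded_of_trans_of_irrefl _

lemma lexgt_wf (n : ℕ) : WellFounded (fun σ τ : Equiv.Perm (Fin n) => lexlt τ σ) := by
  have h1 : IsTrans (Equiv.Perm (Fin n)) (fun σ τ => lexlt τ σ) :=
    ⟨fun _ _ _ h h' => lexlt_trans h' h⟩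
  have h2 : IsIrrefl (Equiv.Perm (Fin n)) (fun σ τ => lexlt τ σ) := ⟨lexlt_irrefl⟩
  exact Finite.wellFounded_of_trans_of_irrefl _



/-- Greedy coloring of the letters of `σ₀`, by length of longest decreasing subsequence
ending at the position of the letter. -/
noncomputable def gcolor {σ₀ : Equiv.Perm (Fin n)} (h : Good d σ₀) : Fin n → Fin d :=
  fun v => ⟨lds σ₀ (σ₀⁻¹ v) - 1, by
    have h1 := one_le_lds σ₀ (σ₀⁻¹ v)
    have h2 := lds_le_of_good h (σ₀⁻¹ v)
    omega⟩

lemma lexlt_of_color_eq {σ σ₀ : Equiv.Perm (Fin n)} (h : Good d σ₀)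
    (hc : (gcolor h) ∘ ⇑σ = (gcolor h) ∘ ⇑σ₀) (hne : σ ≠ σ₀) : lexlt σ₀ σ := by
  classical
  set S : Finset (Fin n) := Finset.univ.filter (fun j => σ j ≠ σ₀ j) with hS
  have hSne : S.Nonempty := by
    by_contra hemp
    refine hne (Equiv.ext fun j => ?_)
    rw [Finset.not_nonempty_iff_eq_empty] at hemp
    by_contra hj
    have : j ∈ S := by simp [hS, hj]
    simp [hemp] at this
  set i := S.min' hSne with hi
  have hiS : i ∈ S := S.min'_mem hSne
  have hine : σ i ≠ σ₀ i := by simpa [hS] using hiS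
  have hmin : ∀ j, j < i → σ j = σ₀ j := by
    intro j hj
    by_contra hjne
    have : j ∈ S := by simp [hS, hjne]
    exact absurd (S.min'_le j this) (not_le.2 hj)
  refine ⟨i, fun j hj => (hmin j hj).symm, ?_⟩
  -- remains: σ₀ i < σ i
  rcases lt_trichotomy (σ i) (σ₀ i) with hlt | heq | hgt
  · exfalso
    have hceq : gcolor h (σ i) = gcolor h (σ₀ i) := congrFun hc i
    have hldseq : lds σ₀ (σ₀⁻¹ (σ i)) = lds σ₀ (σ₀⁻¹ (σ₀ i)) := by
      have := Fin.mk.inj_iff.1 hceq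
      have h1 := one_le_lds σ₀ (σ₀⁻¹ (σ i))
      have h2 := one_le_lds σ₀ (σ₀⁻¹ (σ₀ i))
      omega
    rw [perm_inv_apply_self] at hldseq
    set q := σ₀⁻¹ (σ i) with hq
    have hq0 : σ₀ q = σ i := perm_apply_inv_self _ _
    have hqne : q ≠ i := by
      intro hqe
      rw [hqe] at hq0
      exact hine hq0.symm
    rcases lt_or_gt_of_ne hqne with hqi | hiq
    · -- q < i : then σ q = σ₀ q = σ i, contradicting injectivity
      have : σ q = σ i := by rw [hmin q hqi, hq0]
      exact hqne (σ.injective this)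
    · -- i < q : lds σ₀ i < lds σ₀ q since σ₀ q = σ i < σ₀ i
      have : lds σ₀ i < lds σ₀ q := lds_lt_lds hiq (by rw [hq0]; exact hlt)
      omega
  · exact absurd heq hine
  · exact hgt

lemma lexlt_mul_viaEmbedding {σ : Equiv.Perm (Fin n)} {p : Fin (d+1) → Fin n}
    (hp : StrictMono p) (ha : StrictAnti (⇑σ ∘ p)) {ρ : Equiv.Perm (Fin (d+1))} (hρ : ρ ≠ 1) :
    lexlt (σ * ρ.viaEmbedding ⟨p, hp.injective⟩) σ := by
  classical
  set q : Fin (d+1) ↪ Fin n := ⟨p, hp.injective⟩ with hqdef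
  set S : Finset (Fin (d+1)) := Finset.univ.filter (fun j => ρ j ≠ j) with hS
  have hSne : S.Nonempty := by
    by_contra hemp
    refine hρ (Equiv.ext fun j => ?_)
    rw [Finset.not_nonempty_iff_eq_empty] at hemp
    simp only [Equiv.Perm.one_apply]
    by_contra hj
    have : j ∈ S := by simp [hS, hj]
    simp [hemp] at this
  set i₀ := S.min' hSne with hi₀
  have hi₀S : i₀ ∈ S := S.min'_mem hSne
  have hi₀ne : ρ i₀ ≠ i₀ := by simpa [hS] using hi₀S
  have hmin : ∀ j, j < i₀ → ρ j = j := by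
    intro j hj
    by_contra hjne
    have : j ∈ S := by simp [hS, hjne]
    exact absurd (S.min'_le j this) (not_le.2 hj)
  have hi₀lt : i₀ < ρ i₀ := by
    rcases lt_or_gt_of_ne hi₀ne with hlt | hgt
    · exfalso
      have := hmin (ρ i₀) hlt
      exact hi₀ne (ρ.injective this)
    · exact hgt
  refine ⟨p i₀, ?_, ?_⟩
  · intro x hx
    simp only [Equiv.Perm.mul_apply]
    by_cases hxr : x ∈ Set.range ⇑q
    · obtain ⟨j, rfl⟩ := hxr
      have hj : j < i₀ := by
        have : q j < p i₀ := hx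
        exact hp.lt_iff_lt.1 this
      rw [Equiv.Perm.viaEmbedding_apply, hmin j hj]
    · rw [Equiv.Perm.viaEmbedding_apply_of_notMem _ _ _ hxr]
  · simp only [Equiv.Perm.mul_apply]
    have : ρ.viaEmbedding q (p i₀) = p (ρ i₀) := Equiv.Perm.viaEmbedding_apply ρ q i₀
    rw [this]
    exact ha hi₀lt

lemma viaEmbedding_conj (ρ : Equiv.Perm (Fin (d+1))) (q : Fin (d+1) ↪ Fin n)
    (τ : Equiv.Perm (Fin n)) :
    τ * ρ.viaEmbedding q * τ⁻¹ = ρ.viaEmbedding (q.trans τ.toEmbedding) := by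
  ext x
  simp only [Equiv.Perm.mul_apply]
  by_cases hx : x ∈ Set.range ⇑(q.trans τ.toEmbedding)
  · obtain ⟨j, rfl⟩ := hx
    have h1 : (q.trans τ.toEmbedding) j = τ (q j) := rfl
    rw [h1, perm_inv_apply_self, Equiv.Perm.viaEmbedding_apply]
    rw [show τ (q j) = (q.trans τ.toEmbedding) j from rfl,
      Equiv.Perm.viaEmbedding_apply (ι := q.trans τ.toEmbedding)]
    rfl
  · have hx' : τ⁻¹ x ∉ Set.range ⇑q := by
      rintro ⟨j, hj⟩
      refine hx ⟨j, ?_⟩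
      have : τ (q j) = x := by rw [hj]; exact perm_apply_inv_self _ _
      exact this
    rw [Equiv.Perm.viaEmbedding_apply_of_notMem _ _ _ hx',
      Equiv.Perm.viaEmbedding_apply_of_notMem _ _ _ hx, perm_apply_inv_self]

/-- Any embedding of `Fin (d+1)` into `Fin n` factors through `Fin.castLEEmb` and a permutation. -/
lemma exists_perm_comp (h : d + 1 ≤ n) (q : Fin (d+1) ↪ Fin n) :
    ∃ τ : Equiv.Perm (Fin n), (Fin.castLEEmb h).trans τ.toEmbedding = q := by
  classical
  set q0 : Fin (d+1) ↪ Fin n := Fin.castLEEmb h with hq0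
  have hcard : Fintype.card ((Set.range ⇑q0)ᶜ : Set (Fin n)) =
      Fintype.card ((Set.range ⇑q)ᶜ : Set (Fin n)) := by
    rw [Fintype.card_compl_set, Fintype.card_compl_set,
      Set.card_range_of_injective q0.injective, Set.card_range_of_injective q.injective]
  set e₁ : (Set.range ⇑q0) ≃ (Set.range ⇑q) :=
    (Equiv.ofInjective _ q0.injective).symm.trans (Equiv.ofInjective _ q.injective) with he₁
  set e₂ : ((Set.range ⇑q0)ᶜ : Set (Fin n)) ≃ ((Set.range ⇑q)ᶜ : Set (Fin n)) :=
    Fintype.equivOfCardEq hcard with he₂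
  refine ⟨(Equiv.Set.sumCompl (Set.range ⇑q0)).symm.trans
    ((Equiv.sumCongr e₁ e₂).trans (Equiv.Set.sumCompl (Set.range ⇑q))), ?_⟩
  ext j
  simp only [Function.Embedding.trans_apply, Equiv.coe_toEmbedding, Equiv.trans_apply]
  have h1 : (Equiv.Set.sumCompl (Set.range ⇑q0)).symm (q0 j) = Sum.inl ⟨q0 j, ⟨j, rfl⟩⟩ :=
    Equiv.Set.sumCompl_symm_apply_of_mem _
  rw [h1]
  have h2 : (Equiv.sumCongr e₁ e₂) (Sum.inl ⟨q0 j, ⟨j, rfl⟩⟩) = Sum.inl (e₁ ⟨q0 j, ⟨j, rfl⟩⟩) := rfl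
  rw [h2]
  have h3 : e₁ ⟨q0 j, ⟨j, rfl⟩⟩ = ⟨q j, ⟨j, rfl⟩⟩ := by
    simp only [he₁, Equiv.trans_apply]
    have : (Equiv.ofInjective _ q0.injective).symm ⟨q0 j, ⟨j, rfl⟩⟩ = j := by
      apply (Equiv.ofInjective _ q0.injective).injective
      simp
    rw [this]
    rfl
  rw [h3]
  rfl

section Algebra

variable (K : Type*) [Field K]

/-- The antisymmetrizer over the image of the embedding `q`. -/
noncomputable def asym {n d : ℕ} (q : Fin (d+1) ↪ Fin n) :
    MonoidAlgebra K (Equiv.Perm (Fin n)) :=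
  ∑ ρ : Equiv.Perm (Fin (d+1)),
    MonoidAlgebra.single (ρ.viaEmbedding q) ((Equiv.Perm.sign ρ : ℤ) : K)

lemma one_viaEmbedding (q : Fin (d+1) ↪ Fin n) :
    (1 : Equiv.Perm (Fin (d+1))).viaEmbedding q = 1 := by
  rw [← Equiv.Perm.viaEmbeddingHom_apply, map_one]

lemma single_mul_asym (σ : Equiv.Perm (Fin n)) (q : Fin (d+1) ↪ Fin n) :
    MonoidAlgebra.single σ (1:K) * asym K q
      = ∑ ρ : Equiv.Perm (Fin (d+1)),
          MonoidAlgebra.single (σ * ρ.viaEmbedding q) ((Equiv.Perm.sign ρ : ℤ) : K) := by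
  rw [asym, Finset.mul_sum]
  refine Finset.sum_congr rfl fun ρ _ => ?_
  rw [MonoidAlgebra.single_mul_single, one_mul]

lemma conj_asym (τ : Equiv.Perm (Fin n)) (q : Fin (d+1) ↪ Fin n) :
    MonoidAlgebra.single τ (1:K) * asym K q * MonoidAlgebra.single τ⁻¹ (1:K)
      = asym K (q.trans τ.toEmbedding) := by
  rw [asym, Finset.mul_sum, Finset.sum_mul, asym]
  refine Finset.sum_congr rfl fun ρ _ => ?_
  rw [MonoidAlgebra.single_mul_single, MonoidAlgebra.single_mul_single, one_mul, mul_one,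
    viaEmbedding_conj]

variable {K}

lemma asym_mem_span (h : d + 1 ≤ n) (q : Fin (d+1) ↪ Fin n) :
    asym K q ∈ TwoSidedIdeal.span {asym K (Fin.castLEEmb h)} := by
  obtain ⟨τ, hτ⟩ := exists_perm_comp h q
  have hc := conj_asym K τ (Fin.castLEEmb h)
  rw [hτ] at hc
  rw [← hc]
  exact TwoSidedIdeal.mul_mem_right _ _ _
    (TwoSidedIdeal.mul_mem_left _ _ _ (TwoSidedIdeal.subset_span (Set.mem_singleton _)))

lemma smul_mem_span_asym (h : d + 1 ≤ n) (c : K) {z : MonoidAlgebra K (Equiv.Perm (Fin n))}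
    (hz : z ∈ TwoSidedIdeal.span {asym K (Fin.castLEEmb h)}) :
    c • z ∈ TwoSidedIdeal.span {asym K (Fin.castLEEmb h)} := by
  rw [Algebra.smul_def]
  exact TwoSidedIdeal.mul_mem_left _ _ _ hz

lemma single_good_decomp (h : d + 1 ≤ n) (σ : Equiv.Perm (Fin n)) :
    ∃ y : MonoidAlgebra K (Equiv.Perm (Fin n)), (∀ τ, y.coeff τ ≠ 0 → Good d τ) ∧
      MonoidAlgebra.single σ (1:K) - y ∈ TwoSidedIdeal.span {asym K (Fin.castLEEmb h)} := by
  induction σ using (lexlt_wf n).induction with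
  | _ σ IH =>
  by_cases hgood : Good d σ
  · refine ⟨MonoidAlgebra.single σ 1, fun τ hτ => ?_, by simp⟩
    have : τ = σ := by
      by_contra hne
      exact hτ (Finsupp.single_eq_of_ne hne)
    rwa [this]
  · simp only [Good, not_forall, not_not] at hgood
    obtain ⟨p, hp, hanti⟩ := hgood
    set q : Fin (d+1) ↪ Fin n := ⟨p, hp.injective⟩ with hq
    have IH' : ∀ ρ : Equiv.Perm (Fin (d+1)), ρ ≠ 1 →
        ∃ y : MonoidAlgebra K (Equiv.Perm (Fin n)), (∀ τ, y.coeff τ ≠ 0 → Good d τ) ∧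
          MonoidAlgebra.single (σ * ρ.viaEmbedding q) (1:K) - y ∈
            TwoSidedIdeal.span {asym K (Fin.castLEEmb h)} :=
      fun ρ hρ => IH _ (lexlt_mul_viaEmbedding hp hanti hρ)
    choose! Y hY1 hY2 using IH'
    classical
    refine ⟨-∑ ρ ∈ Finset.univ.erase (1 : Equiv.Perm (Fin (d+1))),
      ((Equiv.Perm.sign ρ : ℤ) : K) • Y ρ, ?_, ?_⟩
    · intro τ hτ
      rw [MonoidAlgebra.coeff_neg, Finsupp.neg_apply] at hτ
      rw [neg_ne_zero] at hτ
      rw [MonoidAlgebra.coeff_sum, Finset.sum_apply'] at hτ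
      obtain ⟨ρ, hρmem, hρne⟩ := Finset.exists_ne_zero_of_sum_ne_zero hτ
      rw [MonoidAlgebra.coeff_smul_apply] at hρne
      have : (Y ρ).coeff τ ≠ 0 := fun h0 => hρne (by rw [h0, smul_zero])
      exact hY1 ρ (Finset.ne_of_mem_erase hρmem) τ this
    · have hsplit : MonoidAlgebra.single σ (1:K) =
          MonoidAlgebra.single σ (1:K) * asym K q
            - ∑ ρ ∈ Finset.univ.erase (1 : Equiv.Perm (Fin (d+1))),
                ((Equiv.Perm.sign ρ : ℤ) : K) •
                  MonoidAlgebra.single (σ * ρ.viaEmbedding q) (1:K) := by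
        rw [single_mul_asym,
          ← Finset.add_sum_erase _ _ (Finset.mem_univ (1 : Equiv.Perm (Fin (d+1))))]
        rw [one_viaEmbedding, mul_one, map_one]
        push_cast
        rw [eq_sub_iff_add_eq]
        congr 1
        refine Finset.sum_congr rfl fun ρ _ => ?_
        rw [MonoidAlgebra.smul_single, smul_eq_mul, mul_one]
      have hkey : MonoidAlgebra.single σ (1:K)
            - (-∑ ρ ∈ Finset.univ.erase (1 : Equiv.Perm (Fin (d+1))),
                ((Equiv.Perm.sign ρ : ℤ) : K) • Y ρ)
          = MonoidAlgebra.single σ (1:K) * asym K q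
            - ∑ ρ ∈ Finset.univ.erase (1 : Equiv.Perm (Fin (d+1))),
                ((Equiv.Perm.sign ρ : ℤ) : K) •
                  (MonoidAlgebra.single (σ * ρ.viaEmbedding q) (1:K) - Y ρ) := by
        conv_lhs => rw [hsplit]
        simp only [smul_sub, Finset.sum_sub_distrib]
        abel
      rw [hkey]
      refine TwoSidedIdeal.sub_mem _ ?_ ?_
      · exact TwoSidedIdeal.mul_mem_left _ _ _ (asym_mem_span h q)
      · refine TwoSidedIdeal.finsetSum_mem _ _ _ fun ρ hρ => ?_
        exact smul_mem_span_asym h _ (hY2 ρ (Finset.ne_of_mem_erase hρ))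

lemma exists_good_decomp (h : d + 1 ≤ n) (x : MonoidAlgebra K (Equiv.Perm (Fin n))) :
    ∃ y : MonoidAlgebra K (Equiv.Perm (Fin n)), (∀ τ, y.coeff τ ≠ 0 → Good d τ) ∧
      x - y ∈ TwoSidedIdeal.span {asym K (Fin.castLEEmb h)} := by
  classical
  choose! Y hY1 hY2 using single_good_decomp (K := K) h
  refine ⟨∑ σ ∈ x.coeff.support, x.coeff σ • Y σ, ?_, ?_⟩
  · intro τ hτ
    rw [MonoidAlgebra.coeff_sum, Finset.sum_apply'] at hτ
    obtain ⟨σ, hσmem, hσne⟩ := Finset.exists_ne_zero_of_sum_ne_zero hτ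
    rw [MonoidAlgebra.coeff_smul_apply] at hσne
    have : (Y σ).coeff τ ≠ 0 := fun h0 => hσne (by rw [h0, smul_zero])
    exact hY1 σ τ this
  · have heq : x - (∑ σ ∈ x.coeff.support, x.coeff σ • Y σ)
        = ∑ σ ∈ x.coeff.support, (x.coeff σ • (MonoidAlgebra.single σ (1:K) - Y σ)) := by
      simp only [smul_sub, Finset.sum_sub_distrib]
      congr 1
      conv_lhs => rw [← MonoidAlgebra.sum_coeff_single x, Finsupp.sum]
      refine Finset.sum_congr rfl fun σ _ => ?_
      rw [MonoidAlgebra.smul_single, smul_eq_mul, mul_one]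
    rw [heq]
    refine TwoSidedIdeal.finsetSum_mem _ _ _ fun σ _ => ?_
    exact smul_mem_span_asym h _ (hY2 σ)

lemma eq_zero_of_good {x : MonoidAlgebra K (Equiv.Perm (Fin n))}
    (hsupp : ∀ σ, x.coeff σ ≠ 0 → Good d σ)
    (hcond : ∀ f g : Fin n → Fin d,
      (∑ σ : Equiv.Perm (Fin n), if f ∘ ⇑σ⁻¹ = g then x.coeff σ else 0) = 0) :
    x = 0 := by
  classical
  refine MonoidAlgebra.ext (Finsupp.ext fun σ₀ => ?_)
  rw [MonoidAlgebra.coeff_zero, Finsupp.coe_zero, Pi.zero_apply]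
  induction σ₀ using (lexgt_wf n).induction with
  | _ σ₀ IH =>
  by_cases hgood : Good d σ₀
  · set g := gcolor hgood with hg
    have hc := hcond (g ∘ ⇑σ₀) g
    have hsum : (∑ σ : Equiv.Perm (Fin n), if (g ∘ ⇑σ₀) ∘ ⇑σ⁻¹ = g then x.coeff σ else 0)
        = x.coeff σ₀ := by
      rw [Finset.sum_eq_single σ₀]
      · rw [if_pos]
        funext v
        simp [perm_inv_apply_self]
      · intro σ _ hne
        by_cases hcnd : (g ∘ ⇑σ₀) ∘ ⇑σ⁻¹ = g
        · rw [if_pos hcnd]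
          have hcomp : g ∘ ⇑σ = g ∘ ⇑σ₀ := by
            funext v
            have h2 := congrFun hcnd (σ v)
            simp only [Function.comp_apply, perm_inv_apply_self] at h2
            exact h2.symm
          exact IH σ (lexlt_of_color_eq hgood hcomp hne)
        · rw [if_neg hcnd]
      · intro hmem
        exact absurd (Finset.mem_univ σ₀) hmem
    rw [hsum] at hc
    exact hc
  · by_contra h0
    exact hgood (hsupp _ h0)

end Algebra

section Tensor

open PiTensorProduct

variable (K : Type*) [Field K] (V : Type*) [AddCommGroup V] [Module K V]

lemma permMap_tprod (σ : Equiv.Perm (Fin n)) (v : Fin n → V) :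
    permMap K V n σ (tprod K v) = tprod K (fun i => v (σ⁻¹ i)) := by
  simp only [permMap, LinearEquiv.coe_coe, reindex_tprod]
  rfl

lemma PhiMap_apply (x : MonoidAlgebra K (Equiv.Perm (Fin n))) (t : ⨂[K] _ : Fin n, V) :
    PhiMap K V n x t = ∑ σ : Equiv.Perm (Fin n), x.coeff σ • permMap K V n σ t := by
  have h0 : PhiMap K V n x = x.coeff.sum fun σ c => c • permMap K V n σ := rfl
  have h1 : PhiMap K V n x = ∑ σ : Equiv.Perm (Fin n), x.coeff σ • permMap K V n σ := by
    rw [h0, Finsupp.sum_fintype]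
    intro σ
    rw [zero_smul]
  rw [h1, LinearMap.sum_apply]
  refine Finset.sum_congr rfl fun σ _ => ?_
  rw [LinearMap.smul_apply]

/-- The product-of-coordinates functional associated to a basis `b` and `g`. -/
noncomputable def coordFn (b : Module.Basis (Fin d) K V) (g : Fin n → Fin d) :
    (⨂[K] _ : Fin n, V) →ₗ[K] K :=
  PiTensorProduct.lift ((MultilinearMap.mkPiAlgebra K (Fin n) K).compLinearMap
    (fun i => b.coord (g i)))

lemma coordFn_tprod (b : Module.Basis (Fin d) K V) (g : Fin n → Fin d) (u : Fin n → Fin d) :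
    coordFn K V b g (tprod K (fun i => b (u i))) = if u = g then 1 else 0 := by
  classical
  rw [coordFn, PiTensorProduct.lift.tprod]
  rw [MultilinearMap.compLinearMap_apply, MultilinearMap.mkPiAlgebra_apply]
  by_cases h : u = g
  · subst h
    rw [if_pos rfl]
    refine Finset.prod_eq_one fun i _ => ?_
    simp [Module.Basis.coord_apply, Module.Basis.repr_self_apply]
  · rw [if_neg h]
    obtain ⟨i, hi⟩ := Function.ne_iff.1 h
    refine Finset.prod_eq_zero (Finset.mem_univ i) ?_
    simp [Module.Basis.coord_apply, Module.Basis.repr_self_apply, hi]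

lemma phi_eq_zero_iff (b : Module.Basis (Fin d) K V) (x : MonoidAlgebra K (Equiv.Perm (Fin n))) :
    PhiMap K V n x = 0 ↔ ∀ f g : Fin n → Fin d,
      (∑ σ : Equiv.Perm (Fin n), if f ∘ ⇑σ⁻¹ = g then x.coeff σ else 0) = 0 := by
  classical
  constructor
  · intro hx f g
    have h0 : coordFn K V b g (PhiMap K V n x (tprod K (fun i => b (f i)))) = 0 := by
      rw [hx]; simp
    rw [PhiMap_apply, map_sum] at h0
    have hsum : ∀ σ : Equiv.Perm (Fin n),
        coordFn K V b g (x.coeff σ • permMap K V n σ (tprod K (fun i => b (f i))))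
          = if f ∘ ⇑σ⁻¹ = g then x.coeff σ else 0 := by
      intro σ
      rw [map_smul, permMap_tprod]
      have hh : (fun i => b (f (σ⁻¹ i))) = (fun i => b ((f ∘ ⇑σ⁻¹) i)) := rfl
      rw [hh, coordFn_tprod, smul_eq_mul, mul_ite, mul_one, mul_zero]
    rw [Finset.sum_congr rfl (fun σ _ => hsum σ)] at h0
    exact h0
  · intro hcond
    have hbasis : ∀ f : Fin n → Fin d, PhiMap K V n x (tprod K (fun i => b (f i))) = 0 := by
      intro f
      rw [PhiMap_apply]
      have hterm : ∀ σ : Equiv.Perm (Fin n),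
          x.coeff σ • permMap K V n σ (tprod K (fun i => b (f i)))
            = ∑ g : Fin n → Fin d,
                (if f ∘ ⇑σ⁻¹ = g then x.coeff σ else 0) • tprod K (fun i => b (g i)) := by
        intro σ
        rw [permMap_tprod]
        have h2 : ∀ g : Fin n → Fin d,
            (if f ∘ ⇑σ⁻¹ = g then x.coeff σ else 0) • tprod K (fun i => b (g i))
              = (if f ∘ ⇑σ⁻¹ = g then x.coeff σ • tprod K (fun i => b (g i)) else 0) := by
          intro g
          rw [ite_smul, zero_smul]
        rw [Finset.sum_congr rfl (fun g _ => h2 g), Finset.sum_ite_eq]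
        rw [if_pos (Finset.mem_univ _)]
        rfl
      rw [Finset.sum_congr rfl (fun σ _ => hterm σ), Finset.sum_comm]
      refine Finset.sum_eq_zero fun g _ => ?_
      rw [← Finset.sum_smul, hcond f g, zero_smul]
    refine PiTensorProduct.ext ?_
    refine MultilinearMap.ext fun v => ?_
    simp only [LinearMap.compMultilinearMap_apply, LinearMap.zero_apply]
    have hv : tprod K v = ∑ f : Fin n → Fin d,
        (∏ i, b.repr (v i) (f i)) • tprod K (fun i => b (f i)) := by
      have hv1 : v = fun i => ∑ j : Fin d, b.repr (v i) j • b j := by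
        funext i
        rw [Module.Basis.sum_repr]
      conv_lhs => rw [hv1]
      rw [MultilinearMap.map_sum]
      refine Finset.sum_congr rfl fun f _ => ?_
      rw [MultilinearMap.map_smul_univ]
    rw [hv, map_sum]
    refine Finset.sum_eq_zero fun f _ => ?_
    rw [map_smul, hbasis f, smul_zero]

/-- `permMap` as a monoid homomorphism to the endomorphism monoid. -/
noncomputable def permHom : Equiv.Perm (Fin n) →* Module.End K (⨂[K] _ : Fin n, V) where
  toFun σ := permMap K V n σ
  map_one' := by
    refine PiTensorProduct.ext (MultilinearMap.ext fun v => ?_)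
    simp only [LinearMap.compMultilinearMap_apply, permMap_tprod, inv_one,
      Equiv.Perm.one_apply, Module.End.one_apply]
  map_mul' σ τ := by
    refine PiTensorProduct.ext (MultilinearMap.ext fun v => ?_)
    simp only [LinearMap.compMultilinearMap_apply, Module.End.mul_apply, permMap_tprod,
      mul_inv_rev, Equiv.Perm.mul_apply]

/-- `Φ` as an algebra homomorphism. -/
noncomputable def PhiAlg : MonoidAlgebra K (Equiv.Perm (Fin n)) →ₐ[K]
    Module.End K (⨂[K] _ : Fin n, V) :=
  MonoidAlgebra.lift K _ (Equiv.Perm (Fin n)) (permHom K V (n := n))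

lemma phiMap_eq_phiAlg (x : MonoidAlgebra K (Equiv.Perm (Fin n))) :
    PhiMap K V n x = PhiAlg K V x := by
  rw [PhiAlg, MonoidAlgebra.lift_apply]
  rfl

end Tensor

section Main

variable {K : Type*} [Field K]

lemma asym_coeff_sum (hn : d < n) (f g : Fin n → Fin d) :
    (∑ σ : Equiv.Perm (Fin n),
      if f ∘ ⇑σ⁻¹ = g then (asym K (Fin.castLEEmb hn)).coeff σ else 0) = 0 := by
  classical
  set q0 : Fin (d+1) ↪ Fin n := Fin.castLEEmb hn with hq0
  have hcoef : ∀ σ : Equiv.Perm (Fin n), (asym K q0).coeff σ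
      = ∑ ρ : Equiv.Perm (Fin (d+1)),
          if ρ.viaEmbedding q0 = σ then ((Equiv.Perm.sign ρ : ℤ) : K) else 0 := by
    intro σ
    rw [asym, MonoidAlgebra.coeff_sum, Finset.sum_apply']
    refine Finset.sum_congr rfl fun ρ _ => ?_
    rw [MonoidAlgebra.coeff_single, Finsupp.single_apply]
  have hstep : (∑ σ : Equiv.Perm (Fin n), if f ∘ ⇑σ⁻¹ = g then (asym K q0).coeff σ else 0)
      = ∑ ρ : Equiv.Perm (Fin (d+1)),
          if f ∘ ⇑(ρ.viaEmbedding q0)⁻¹ = g then ((Equiv.Perm.sign ρ : ℤ) : K) else 0 := by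
    have h1 : ∀ σ : Equiv.Perm (Fin n), (if f ∘ ⇑σ⁻¹ = g then (asym K q0).coeff σ else 0)
        = ∑ ρ : Equiv.Perm (Fin (d+1)), if ρ.viaEmbedding q0 = σ then
            (if f ∘ ⇑σ⁻¹ = g then ((Equiv.Perm.sign ρ : ℤ) : K) else 0) else 0 := by
      intro σ
      by_cases hc : f ∘ ⇑σ⁻¹ = g
      · simp only [if_pos hc]
        exact hcoef σ
      · simp only [if_neg hc]
        symm
        exact Finset.sum_eq_zero fun ρ _ => by rw [ite_self]
    rw [Finset.sum_congr rfl (fun σ _ => h1 σ), Finset.sum_comm]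
    refine Finset.sum_congr rfl fun ρ _ => ?_
    rw [Finset.sum_ite_eq, if_pos (Finset.mem_univ _)]
  rw [hstep]
  obtain ⟨i₀, j₀, hne, hfe⟩ : ∃ i j : Fin (d+1), i ≠ j ∧ f (q0 i) = f (q0 j) := by
    obtain ⟨i, j, hij, hfeq⟩ := Fintype.exists_ne_map_eq_of_card_lt
      (fun j : Fin (d+1) => f (q0 j)) (by simp)
    exact ⟨i, j, hij, hfeq⟩
  set t : Equiv.Perm (Fin (d+1)) := Equiv.swap i₀ j₀ with ht
  have hfq : f ∘ ⇑(t.viaEmbedding q0) = f := by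
    funext x
    by_cases hx : x ∈ Set.range ⇑q0
    · obtain ⟨k, rfl⟩ := hx
      rw [Function.comp_apply, Equiv.Perm.viaEmbedding_apply]
      rcases eq_or_ne k i₀ with rfl | hk1
      · rw [ht, Equiv.swap_apply_left]; exact hfe.symm
      · rcases eq_or_ne k j₀ with rfl | hk2
        · rw [ht, Equiv.swap_apply_right]; exact hfe
        · rw [ht, Equiv.swap_apply_of_ne_of_ne hk1 hk2]
    · rw [Function.comp_apply, Equiv.Perm.viaEmbedding_apply_of_notMem _ _ _ hx]
  have hC : ∀ ρ : Equiv.Perm (Fin (d+1)),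
      (f ∘ ⇑((ρ * t).viaEmbedding q0)⁻¹ = g) ↔ (f ∘ ⇑(ρ.viaEmbedding q0)⁻¹ = g) := by
    intro ρ
    have hhom : (ρ * t).viaEmbedding q0 = ρ.viaEmbedding q0 * t.viaEmbedding q0 := by
      rw [← Equiv.Perm.viaEmbeddingHom_apply, ← Equiv.Perm.viaEmbeddingHom_apply,
        ← Equiv.Perm.viaEmbeddingHom_apply, map_mul]
    have hinv : (t.viaEmbedding q0)⁻¹ = t.viaEmbedding q0 := by
      rw [← Equiv.Perm.viaEmbeddingHom_apply, ← map_inv, ht, Equiv.swap_inv]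
    rw [hhom, mul_inv_rev, hinv, Equiv.Perm.coe_mul, ← Function.comp_assoc, hfq]
  refine Finset.sum_ninvolution (fun ρ => ρ * t) ?_ ?_ (fun ρ => Finset.mem_univ _) ?_
  · intro ρ
    by_cases hc : f ∘ ⇑(ρ.viaEmbedding q0)⁻¹ = g
    · rw [if_pos hc, if_pos ((hC ρ).2 hc)]
      have hsign : Equiv.Perm.sign (ρ * t) = - Equiv.Perm.sign ρ := by
        rw [map_mul, ht, Equiv.Perm.sign_swap hne, mul_neg_one]
      rw [hsign]
      push_cast
      ring
    · rw [if_neg hc, if_neg (fun hcc => hc ((hC ρ).1 hcc)), add_zero]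
  · intro ρ _ heq
    have h1 : ρ * t = ρ * 1 := by rw [mul_one]; exact heq
    have h2 : t = 1 := mul_left_cancel h1
    have h3 : Equiv.swap i₀ j₀ i₀ = i₀ := by rw [← ht, h2]; rfl
    rw [Equiv.swap_apply_left] at h3
    exact hne h3.symm
  · intro ρ
    show ρ * t * t = ρ
    rw [mul_assoc, ht, Equiv.swap_mul_self, mul_one]

variable (V : Type*) [AddCommGroup V] [Module K V]

lemma phi_asym_zero (b : Module.Basis (Fin d) K V) (hn : d < n) :
    PhiMap K V n (asym K (Fin.castLEEmb hn)) = 0 :=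
  (phi_eq_zero_iff K V b _).2 (fun f g => asym_coeff_sum hn f g)

lemma span_le_ker (b : Module.Basis (Fin d) K V) (hn : d < n) :
    ∀ z ∈ TwoSidedIdeal.span {asym K (Fin.castLEEmb hn)}, PhiMap K V n z = 0 := by
  intro z hz
  have hker : asym K (Fin.castLEEmb hn) ∈ TwoSidedIdeal.ker (PhiAlg K V (n := n)) := by
    rw [TwoSidedIdeal.mem_ker, ← phiMap_eq_phiAlg]
    exact phi_asym_zero V b hn
  have hmem := TwoSidedIdeal.mem_span_iff.1 hz (TwoSidedIdeal.ker (PhiAlg K V (n := n)))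
    (Set.singleton_subset_iff.2 hker)
  rw [phiMap_eq_phiAlg]
  exact (TwoSidedIdeal.mem_ker _).1 hmem

end Main

end SW

/-- if `dim_K V = d < n`, the kernel of `Φ_V : K[S_n] → End_K(V^{⊗n})` is the
two-sided ideal of `K[S_n]` generated by `Σ_{σ ∈ S_{d+1}} sgn(σ)·ι(σ)`, where
`ι : S_{d+1} → S_n` lets a permutation act on the first `d+1` letters. -/
theorem stmt4 (K : Type*) [Field K] [CharZero K] (V : Type*) [AddCommGroup V] [Module K V]
    [FiniteDimensional K V] (d n : ℕ) (hd : Module.finrank K V = d) (hn : d < n) :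
    ∀ x : MonoidAlgebra K (Equiv.Perm (Fin n)),
      PhiMap K V n x = 0 ↔
        x ∈ TwoSidedIdeal.span
          {∑ σ : Equiv.Perm (Fin (d + 1)),
            MonoidAlgebra.single (σ.viaEmbedding (Fin.castLEEmb hn)) ((Equiv.Perm.sign σ : ℤ) : K)} := by
  intro x
  have hA : (∑ σ : Equiv.Perm (Fin (d + 1)),
      MonoidAlgebra.single (σ.viaEmbedding (Fin.castLEEmb hn)) ((Equiv.Perm.sign σ : ℤ) : K))
      = SW.asym K (Fin.castLEEmb hn) := rfl
  rw [hA]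
  have b : Module.Basis (Fin d) K V := Module.finBasisOfFinrankEq K V hd
  constructor
  · intro hx
    obtain ⟨y, hy1, hy2⟩ := SW.exists_good_decomp (K := K) hn x
    have hxy : PhiMap K V n (x - y) = 0 := SW.span_le_ker V b hn _ hy2
    have hy0 : PhiMap K V n y = 0 := by
      have hsub : PhiMap K V n y = PhiMap K V n x - PhiMap K V n (x - y) := by
        rw [map_sub]; abel
      rw [hsub, hx, hxy, sub_zero]
    have hcond := (SW.phi_eq_zero_iff K V b y).1 hy0
    have hy00 : y = 0 := SW.eq_zero_of_good hy1 hcond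
    rw [hy00, sub_zero] at hy2
    exact hy2
  · intro hx
    exact SW.span_le_ker V b hn x hx
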